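/- Let M be a compact metric space with a Borel probability measure ℓ, let U : M → [0,∞) be continuous and non-constant, fix m ∈ (0,1), and let φ = φ_{m,2} with inverse derivative ψ = ψ_{m,2}. Fix β > 0, let c* ∈ ℝ be such that ∫_M ψ(c* − βU) dℓ = 1 and set μ = ψ(c* − βU), μ_min = min_M μ, μ_max = max_M μ. Then (1 + (1−m)β·osc(U))^{1/(m−1)} ≤ μ_min ≤ μ_max ≤ β·osc(U) + 1, where osc(U) = max_M U − min_M U. -/
import Mathlib


open MeasureTheory Real Set Filter Topology
open scoped ENNReal NNReal

/-- `φ_m(r) = (r^m − 1 − m(r−1))/(m(m−1))`. -/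
noncomputable def phim (m r : ℝ) : ℝ := (r ^ m - 1 - m * (r - 1)) / (m * (m - 1))

/-- The glued potential `φ_{m,2}`: `φ_m` on `[0,1]` and `(r−1)²/2` on `(1,∞)`. -/
noncomputable def phim2 (m r : ℝ) : ℝ := if r ≤ 1 then phim m r else (r - 1) ^ 2 / 2

/-- The derivative `φ'_{m,2}`. -/
noncomputable def dphim2 (m r : ℝ) : ℝ :=
  if r ≤ 1 then (r ^ (m - 1) - 1) / (m - 1) else r - 1

/-- The second derivative `φ''_{m,2}`. -/
noncomputable def ddphim2 (m r : ℝ) : ℝ := if r ≤ 1 then r ^ (m - 2) else 1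

/-- `ψ_{m,2}`, the inverse of `φ'_{m,2}`. -/
noncomputable def psim2 (m s : ℝ) : ℝ :=
  if s ≤ 0 then (1 + (m - 1) * s) ^ (1 / (m - 1)) else 1 + s

lemma psim2_mono {m : ℝ} (hm : m ∈ Set.Ioo (0 : ℝ) 1) : Monotone (psim2 m) := by
  have hm1 : m - 1 < 0 := by linarith [hm.2]
  have he : 1 / (m - 1) < 0 := div_neg_of_pos_of_neg one_pos hm1
  intro s t hst
  unfold psim2
  split_ifs with h1 h2 h2
  · have hbt : (0:ℝ) < 1 + (m - 1) * t := by nlinarith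
    have hbs : 1 + (m - 1) * t ≤ 1 + (m - 1) * s := by nlinarith
    exact Real.rpow_le_rpow_of_nonpos hbt hbs he.le
  · push_neg at h2
    have h1' : (1:ℝ) ≤ 1 + (m - 1) * s := by nlinarith
    have := Real.rpow_le_one_of_one_le_of_nonpos h1' he.le
    linarith
  · push_neg at h1; linarith
  · linarith

lemma psim2_nonneg {m : ℝ} (hm : m ∈ Set.Ioo (0 : ℝ) 1) (s : ℝ) : 0 ≤ psim2 m s := by
  unfold psim2
  split_ifs with h
  · have : (0:ℝ) ≤ 1 + (m - 1) * s := by nlinarith [hm.2]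
    exact Real.rpow_nonneg this _
  · push_neg at h; linarith

lemma psim2_eq {m : ℝ} (s : ℝ) :
    psim2 m s = (1 + (m - 1) * min s 0) ^ (1 / (m - 1)) + max s 0 := by
  unfold psim2
  split_ifs with h
  · rw [min_eq_left h, max_eq_right h, add_zero]
  · push_neg at h
    rw [min_eq_right h.le, max_eq_left h.le, mul_zero, add_zero, Real.one_rpow]

lemma psim2_continuous {m : ℝ} (hm : m < 1) : Continuous (psim2 m) := by
  have : Continuous fun s : ℝ => (1 + (m - 1) * min s 0) ^ (1 / (m - 1)) + max s 0 := by
    refine Continuous.add ?_ (continuous_id.max continuous_const)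
    refine Continuous.rpow_const
      (continuous_const.add (continuous_const.mul (continuous_id.min continuous_const))) ?_
    intro s
    left
    have h1 : (0:ℝ) ≤ (m - 1) * min s 0 := by nlinarith [min_le_right s 0, inf_le_right (a := s) (b := (0:ℝ))]
    positivity
  exact this.congr fun s => (psim2_eq s).symm

/-- Bounds for the stationary density: for `0 < m < 1`,
`(1 + (1−m)β·osc(U))^{1/(m−1)} ≤ μ_min ≤ μ_max ≤ β·osc(U) + 1`. -/
theorem stmt5 {M : Type*} [MetricSpace M] [CompactSpace M] [Nonempty M]
    [MeasurableSpace M] [BorelSpace M]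
    (ℓ : Measure M) [IsProbabilityMeasure ℓ]
    (U : M → ℝ) (hUc : Continuous U) (hU0 : ∀ x, 0 ≤ U x)
    (hUnc : ∃ x y, U x ≠ U y)
    (m : ℝ) (hm : m ∈ Ioo (0 : ℝ) 1)
    (β : ℝ) (hβ : 0 < β) (cs : ℝ)
    (hcs : ∫ x, psim2 m (cs - β * U x) ∂ℓ = 1) :
    ∀ x : M,
      (1 + (1 - m) * (β * ((⨆ y, U y) - ⨅ y, U y))) ^ (1 / (m - 1))
          ≤ psim2 m (cs - β * U x) ∧
      psim2 m (cs - β * U x) ≤ β * ((⨆ y, U y) - ⨅ y, U y) + 1 := by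
  have hm1 : m - 1 < 0 := by linarith [hm.2]
  -- sup and inf attained
  obtain ⟨xmax, -, hxmax'⟩ := isCompact_univ.exists_isMaxOn univ_nonempty hUc.continuousOn
  obtain ⟨xmin, -, hxmin'⟩ := isCompact_univ.exists_isMinOn univ_nonempty hUc.continuousOn
  have hxmax : ∀ y, U y ≤ U xmax := fun y => hxmax' (mem_univ y)
  have hxmin : ∀ y, U xmin ≤ U y := fun y => hxmin' (mem_univ y)
  have hbdd : BddAbove (Set.range U) := (isCompact_range hUc).bddAbove
  have hbdd' : BddBelow (Set.range U) := (isCompact_range hUc).bddBelow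
  have hsup : (⨆ y, U y) = U xmax :=
    le_antisymm (ciSup_le fun y => hxmax y) (le_ciSup hbdd xmax)
  have hinf : (⨅ y, U y) = U xmin :=
    le_antisymm (ciInf_le hbdd' xmin) (le_ciInf fun y => hxmin y)
  set A := U xmin with hA
  set B := U xmax with hB
  have hAB : A < B := by
    obtain ⟨a, b, hab⟩ := hUnc
    rcases lt_or_ge A B with h | h
    · exact h
    · exfalso
      have h1 : U a = A := le_antisymm (le_trans (hxmax a) h) (hxmin a)
      have h2 : U b = A := le_antisymm (le_trans (hxmax b) h) (hxmin b)
      exact hab (h1.trans h2.symm)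
  -- integrability
  have hmeas : AEStronglyMeasurable (fun x => psim2 m (cs - β * U x)) ℓ :=
    ((psim2_continuous hm.2).comp (continuous_const.sub (continuous_const.mul hUc))).aestronglyMeasurable
  have hub : ∀ x, psim2 m (cs - β * U x) ≤ psim2 m (cs - β * A) := fun x =>
    psim2_mono hm (by nlinarith [hxmin x])
  have hlb : ∀ x, psim2 m (cs - β * B) ≤ psim2 m (cs - β * U x) := fun x =>
    psim2_mono hm (by nlinarith [hxmax x])
  have hint : Integrable (fun x => psim2 m (cs - β * U x)) ℓ := by
    refine Integrable.mono' (integrable_const (psim2 m (cs - β * A))) hmeas ?_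
    filter_upwards with x
    rw [Real.norm_eq_abs, abs_of_nonneg (psim2_nonneg hm _)]
    exact hub x
  -- 1 ≤ psim2 m (cs - β*A)
  have h1le : (1:ℝ) ≤ psim2 m (cs - β * A) := by
    calc (1:ℝ) = ∫ x, psim2 m (cs - β * U x) ∂ℓ := hcs.symm
    _ ≤ ∫ _x, psim2 m (cs - β * A) ∂ℓ :=
        integral_mono hint (integrable_const _) hub
    _ = psim2 m (cs - β * A) := by simp
  have hle1 : psim2 m (cs - β * B) ≤ 1 := by
    calc psim2 m (cs - β * B) = ∫ _x, psim2 m (cs - β * B) ∂ℓ := by simp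
    _ ≤ ∫ x, psim2 m (cs - β * U x) ∂ℓ :=
        integral_mono (integrable_const _) hint hlb
    _ = 1 := hcs
  -- deduce βA ≤ cs ≤ βB
  have hcsA : β * A ≤ cs := by
    by_contra h
    push_neg at h
    have hs : cs - β * A < 0 := by linarith
    have hb : 1 < 1 + (m - 1) * (cs - β * A) := by nlinarith
    have := Real.rpow_lt_one_of_one_lt_of_neg hb (div_neg_of_pos_of_neg one_pos hm1)
    rw [psim2, if_pos hs.le] at h1le
    linarith
  have hcsB : cs ≤ β * B := by
    by_contra h
    push_neg at h
    have hs : 0 < cs - β * B := by linarith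
    rw [psim2, if_neg (by linarith)] at hle1
    linarith
  intro x
  constructor
  · have h1 : psim2 m (-(β * (B - A))) ≤ psim2 m (cs - β * U x) := by
      apply psim2_mono hm
      have := hxmax x
      nlinarith
    have h2 : psim2 m (-(β * (B - A))) =
        (1 + (1 - m) * (β * (B - A))) ^ (1 / (m - 1)) := by
      rw [psim2, if_pos (by nlinarith)]
      ring_nf
    rw [hsup, hinf]
    rw [h2] at h1
    exact h1
  · have h1 : psim2 m (cs - β * U x) ≤ psim2 m (β * (B - A)) := by
      apply psim2_mono hm
      have := hxmin x
      nlinarith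
    have h2 : psim2 m (β * (B - A)) = β * (B - A) + 1 := by
      rw [psim2, if_neg (by nlinarith)]
      ring
    rw [hsup, hinf, ← h2]
    exact h1
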